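/- Let D := {(α,β) ∈ H×H : α ≤ β and φ(α) = φ(β)}, and let 𝒟_K(φ) (the doset Hibi ring defined by φ) be the K-subalgebra of K[T_x : x ∈ P] generated by {e(α)·e(β) : (α,β) ∈ D}. Then the underlying K-vector space of 𝒟_K(φ) is exactly the K-linear span of the monomials T^ν, where ν runs over all order reversing maps ν : P → ℕ such that ν(φ*(y)) is even for every join-irreducible element y of L (note that φ*(y) is a join-irreducible element of H for every such y). In particular, these monomials form a K-basis of 𝒟_K(φ). -/

import Mathlib

open scoped Classical

/-- An element `a` of a lattice is join-irreducible if `a = b ⊔ c` implies `a = b` or `a = c`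
(in particular a minimum element is join-irreducible). -/
def JoinIrred {H : Type*} [Lattice H] (a : H) : Prop :=
  ∀ b c : H, a = b ⊔ c → a = b ∨ a = c

/-- For a surjective map `φ : H → L` from a finite lattice, `phistar φ hφ β` is the meet
of the (finite, nonempty) preimage `φ⁻¹(β)`. -/
noncomputable def phistar {H L : Type*} [Lattice H] [Fintype H] [DecidableEq L]
    (φ : H → L) (hφ : Function.Surjective φ) (β : L) : H :=
  (Finset.univ.filter fun α => φ α = β).inf'
    (by obtain ⟨a, ha⟩ := hφ β; exact ⟨a, by simp [ha]⟩) id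

/-- `hibiGen K α = ∏_{x ∈ P, x ≤ α} T_x`, the generator of the Hibi ring attached to `α ∈ H`,
an element of the polynomial ring `K[T_x : x ∈ P]` with `P` the join-irreducibles of `H`. -/
noncomputable def hibiGen {H : Type*} [DistribLattice H] [Fintype H] (K : Type*) [Field K]
    (α : H) : MvPolynomial {x : H // JoinIrred x} K :=
  ∏ x : {x : H // JoinIrred x}, if (x : H) ≤ α then MvPolynomial.X x else 1

/-- `Tpow K ν = T^ν = ∏_{x ∈ P} T_x ^ ν x`. -/
noncomputable def Tpow {H : Type*} [DistribLattice H] [Fintype H] (K : Type*) [Field K]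
    (ν : {x : H // JoinIrred x} → ℕ) : MvPolynomial {x : H // JoinIrred x} K :=
  ∏ x : {x : H // JoinIrred x}, MvPolynomial.X x ^ ν x

open Finset
open scoped Pointwise

section lat
variable {H : Type*} [DistribLattice H]

lemma joinIrred_le_sup {x b c : H} (hx : JoinIrred x) (h : x ≤ b ⊔ c) : x ≤ b ∨ x ≤ c := by
  have hxe : x = (x ⊓ b) ⊔ (x ⊓ c) := by
    rw [← inf_sup_left]; exact (inf_eq_left.mpr h).symm
  rcases hx _ _ hxe with h1 | h1
  · exact Or.inl (h1.le.trans inf_le_right)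
  · exact Or.inr (h1.le.trans inf_le_right)

lemma joinIrred_le_sup' {ι : Type*} {x : H} (hx : JoinIrred x)
    {s : Finset ι} (hs : s.Nonempty) {f : ι → H} (h : x ≤ s.sup' hs f) :
    ∃ i ∈ s, x ≤ f i := by
  induction hs using Finset.Nonempty.cons_induction with
  | singleton a => exact ⟨a, by simp, by simpa using h⟩
  | cons a s ha hs ih =>
    rw [Finset.sup'_cons (H := hs)] at h
    rcases joinIrred_le_sup hx h with h1 | h1
    · exact ⟨a, by simp, h1⟩
    · obtain ⟨i, hi, hxi⟩ := ih h1
      exact ⟨i, by simp [hi], hxi⟩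

end lat

section decomp
variable {L : Type*} [Lattice L] [Fintype L]

/-- every element of a finite lattice is a sup of join-irreducibles below it -/
lemma exists_joinIrred_sup (a : L) :
    ∃ (s : Finset L) (h : s.Nonempty), (∀ y ∈ s, JoinIrred y ∧ y ≤ a) ∧ s.sup' h id = a := by
  induction a using WellFoundedLT.induction with
  | ind a ih =>
    by_cases hji : JoinIrred a
    · exact ⟨{a}, ⟨a, by simp⟩, by simp [hji], by simp⟩
    · simp only [JoinIrred, not_forall] at hji
      obtain ⟨b, c, habc, hor⟩ := hji
      have hb : a ≠ b := fun h => hor (Or.inl h)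
      have hc : a ≠ c := fun h => hor (Or.inr h)
      have hblt : b < a := lt_of_le_of_ne (habc.ge.trans' le_sup_left) (Ne.symm hb)
      have hclt : c < a := lt_of_le_of_ne (habc.ge.trans' le_sup_right) (Ne.symm hc)
      obtain ⟨sb, hsb, hb1, hb2⟩ := ih b hblt
      obtain ⟨sc, hsc, hc1, hc2⟩ := ih c hclt
      refine ⟨sb ∪ sc, hsb.mono subset_union_left, ?_, ?_⟩
      · intro y hy
        rcases Finset.mem_union.mp hy with hy | hy
        · exact ⟨(hb1 y hy).1, (hb1 y hy).2.trans hblt.le⟩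
        · exact ⟨(hc1 y hy).1, (hc1 y hy).2.trans hclt.le⟩
      · rw [Finset.sup'_union hsb hsc id, hb2, hc2, habc]
end decomp

section phist
variable {H L : Type*} [DistribLattice H] [Fintype H] [DistribLattice L] [Fintype L]
    [DecidableEq L] (φ : H → L) (hφ : Function.Surjective φ)
    (hsup : ∀ a b : H, φ (a ⊔ b) = φ a ⊔ φ b) (hinf : ∀ a b : H, φ (a ⊓ b) = φ a ⊓ φ b)

include hinf in
lemma phi_mono {a b : H} (h : a ≤ b) : φ a ≤ φ b := by
  have := hinf a b
  rw [inf_eq_left.mpr h] at this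
  exact inf_eq_left.mp this.symm

include hinf in
lemma phi_phistar (y : L) : φ (phistar φ hφ y) = y := by
  unfold phistar
  have h1 := map_finset_inf' (InfHom.mk φ hinf)
    (show (Finset.univ.filter fun α => φ α = y).Nonempty from
      by obtain ⟨a, ha⟩ := hφ y; exact ⟨a, by simp [ha]⟩) (id : H → H)
  rw [show ⇑(InfHom.mk φ hinf) = φ from rfl] at h1
  rw [h1, Finset.inf'_congr _ rfl (g := fun _ => y)
    (by intro x hx; simpa using (Finset.mem_filter.mp hx).2)]
  exact Finset.inf'_const _ y

include hinf in
lemma phistar_le_iff (y : L) (γ : H) : phistar φ hφ y ≤ γ ↔ y ≤ φ γ := by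
  constructor
  · intro h
    have := phi_mono φ hinf h
    rwa [phi_phistar φ hφ hinf] at this
  · intro h
    have hmem : phistar φ hφ y ⊓ γ ∈ Finset.univ.filter fun α => φ α = y := by
      simp only [Finset.mem_filter, Finset.mem_univ, true_and]
      rw [hinf, phi_phistar φ hφ hinf, inf_eq_left.mpr h]
    have : phistar φ hφ y ≤ phistar φ hφ y ⊓ γ := Finset.inf'_le id hmem
    exact this.trans inf_le_right

include hsup hinf in
lemma joinIrred_phistar {y : L} (hy : JoinIrred y) : JoinIrred (phistar φ hφ y) := by
  intro b c h
  have hyb : y = φ b ⊔ φ c := by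
    rw [← hsup, ← h, phi_phistar φ hφ hinf]
  rcases hy _ _ hyb with h1 | h1
  · left
    have hb : b ∈ Finset.univ.filter fun α => φ α = y := by simp [h1.symm]
    exact le_antisymm (Finset.inf'_le id hb) (le_sup_left.trans h.ge)
  · right
    have hc : c ∈ Finset.univ.filter fun α => φ α = y := by simp [h1.symm]
    exact le_antisymm (Finset.inf'_le id hc) (le_sup_right.trans h.ge)
end phist


section tp
variable {H : Type*} [DistribLattice H] [Fintype H] (K : Type*) [Field K]

lemma Tpow_mul (ν μ : {x : H // JoinIrred x} → ℕ) :
    Tpow K ν * Tpow K μ = Tpow K (ν + μ) := by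
  unfold Tpow
  rw [← Finset.prod_mul_distrib]
  exact Finset.prod_congr rfl fun x _ => (pow_add _ _ _).symm

lemma Tpow_zero : Tpow K (fun _ : {x : H // JoinIrred x} => 0) = 1 := by
  simp [Tpow]

lemma hibiGen_eq (α : H) :
    hibiGen K α = Tpow K (fun x => if (x : H) ≤ α then 1 else 0) := by
  unfold hibiGen Tpow
  refine Finset.prod_congr rfl fun x _ => ?_
  by_cases h : (x : H) ≤ α <;> simp [h]

lemma Tpow_eq_monomial (ν : {x : H // JoinIrred x} → ℕ) :
    Tpow K ν = MvPolynomial.monomial (Finsupp.equivFunOnFinite.symm ν) 1 := by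
  rw [MvPolynomial.monomial_eq, map_one, one_mul,
    Finsupp.prod_fintype _ _ (fun i => pow_zero _)]
  rfl

lemma Tpow_injective : Function.Injective (Tpow (H := H) K) := by
  intro ν μ h
  rw [Tpow_eq_monomial, Tpow_eq_monomial] at h
  have := (MvPolynomial.basisMonomials {x : H // JoinIrred x} K).injective
  rw [MvPolynomial.coe_basisMonomials] at this
  exact Finsupp.equivFunOnFinite.symm.injective (this h)
end tp

set_option maxHeartbeats 1000000 in
lemma key_mem {H L : Type*} [DistribLattice H] [Fintype H] [DistribLattice L] [Fintype L]
    [DecidableEq L] (K : Type*) [Field K] (φ : H → L) (hφ : Function.Surjective φ)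
    (hsup : ∀ a b : H, φ (a ⊔ b) = φ a ⊔ φ b) (hinf : ∀ a b : H, φ (a ⊓ b) = φ a ⊓ φ b) :
    ∀ (n : ℕ) (ν : {x : H // JoinIrred x} → ℕ), (∑ x, ν x) = n →
      (∀ x y : {x : H // JoinIrred x}, (x : H) ≤ (y : H) → ν y ≤ ν x) →
      (∀ x : {x : H // JoinIrred x},
        (∃ y : L, JoinIrred y ∧ (x : H) = phistar φ hφ y) → Even (ν x)) →
      Tpow K ν ∈ Algebra.adjoin K {f : MvPolynomial {x : H // JoinIrred x} K |
          ∃ α β : H, α ≤ β ∧ φ α = φ β ∧ f = hibiGen K α * hibiGen K β} := by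
  intro n
  induction n using Nat.strong_induction_on with
  | _ n ih =>
  intro ν hsum hOR hEV
  by_cases h0 : ∀ x, ν x = 0
  · have hν : ν = fun _ => 0 := funext h0
    rw [hν, Tpow_zero]
    exact one_mem _
  push_neg at h0
  obtain ⟨x₀, hx₀⟩ := h0
  have hx₀1 : 1 ≤ ν x₀ := Nat.one_le_iff_ne_zero.mpr hx₀
  -- bottom elements of H and L
  have hHne : (Finset.univ : Finset H).Nonempty := ⟨x₀.1, Finset.mem_univ _⟩
  set mH : H := Finset.univ.inf' hHne id with hmHdef
  have hmH_le : ∀ a : H, mH ≤ a := fun a => Finset.inf'_le id (Finset.mem_univ a)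
  have hmH_ji : JoinIrred mH := fun b c h =>
    Or.inl (le_antisymm (hmH_le b) (le_sup_left.trans h.ge))
  have hLne : (Finset.univ : Finset L).Nonempty := ⟨φ mH, Finset.mem_univ _⟩
  set mL : L := Finset.univ.inf' hLne id with hmLdef
  have hmL_le : ∀ a : L, mL ≤ a := fun a => Finset.inf'_le id (Finset.mem_univ a)
  have hmL_ji : JoinIrred mL := fun b c h =>
    Or.inl (le_antisymm (hmL_le b) (le_sup_left.trans h.ge))
  have hφmH : φ mH = mL := by
    refine le_antisymm (Finset.le_inf' _ _ fun b _ => ?_) (hmL_le _)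
    obtain ⟨a, rfl⟩ := hφ b
    exact phi_mono φ hinf (hmH_le a)
  have hpm : phistar φ hφ mL = mH := by
    refine le_antisymm (Finset.inf'_le id ?_) (hmH_le _)
    simp only [Finset.mem_filter, Finset.mem_univ, true_and]
    exact hφmH
  have hmem_even : Even (ν ⟨mH, hmH_ji⟩) := hEV _ ⟨mL, hmL_ji, hpm.symm⟩
  have h2m : 2 ≤ ν ⟨mH, hmH_ji⟩ := by
    have h1 : ν x₀ ≤ ν ⟨mH, hmH_ji⟩ := hOR _ x₀ (hmH_le _)
    obtain ⟨k, hk⟩ := hmem_even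
    omega
  -- the two sups
  have hS₂ne : (Finset.univ.filter fun x : {x : H // JoinIrred x} => 2 ≤ ν x).Nonempty :=
    ⟨⟨mH, hmH_ji⟩, by simp [h2m]⟩
  have hS₁ne : (Finset.univ.filter fun x : {x : H // JoinIrred x} => 1 ≤ ν x).Nonempty :=
    ⟨x₀, by simp [hx₀1]⟩
  set α : H := (Finset.univ.filter fun x : {x : H // JoinIrred x} => 2 ≤ ν x).sup' hS₂ne
    (fun x => (x : H)) with hαdef
  set β : H := (Finset.univ.filter fun x : {x : H // JoinIrred x} => 1 ≤ ν x).sup' hS₁ne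
    (fun x => (x : H)) with hβdef
  have hsub : (Finset.univ.filter fun x : {x : H // JoinIrred x} => 2 ≤ ν x) ⊆
      (Finset.univ.filter fun x : {x : H // JoinIrred x} => 1 ≤ ν x) := by
    intro x hx
    simp only [Finset.mem_filter, Finset.mem_univ, true_and] at hx ⊢
    omega
  have hαβ : α ≤ β := Finset.sup'_mono (fun x : {x : H // JoinIrred x} => (x : H)) hsub hS₂ne
  have hiff : ∀ (k : ℕ) (hk : (Finset.univ.filter fun x : {x : H // JoinIrred x} => k ≤ ν x).Nonempty)
      (p : {x : H // JoinIrred x}),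
      (p : H) ≤ (Finset.univ.filter fun x : {x : H // JoinIrred x} => k ≤ ν x).sup' hk
        (fun x => (x : H)) ↔ k ≤ ν p := by
    intro k hk p
    constructor
    · intro h
      obtain ⟨q, hq, hpq⟩ := joinIrred_le_sup' p.2 hk h
      have := hOR p q hpq
      simp only [Finset.mem_filter, Finset.mem_univ, true_and] at hq
      omega
    · intro h
      exact Finset.le_sup' (fun x : {x : H // JoinIrred x} => (x : H))
        (by simp only [Finset.mem_filter, Finset.mem_univ, true_and]; exact h)
  have hφαβ : φ α = φ β := by
    refine le_antisymm (phi_mono φ hinf hαβ) ?_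
    obtain ⟨s, hs, hprop, hseq⟩ := exists_joinIrred_sup (φ β)
    rw [← hseq]
    refine Finset.sup'_le _ _ fun y hy => ?_
    obtain ⟨hyji, hyle⟩ := hprop y hy
    have hps : phistar φ hφ y ≤ β := (phistar_le_iff φ hφ hinf y β).mpr hyle
    have hpj : JoinIrred (phistar φ hφ y) := joinIrred_phistar φ hφ hsup hinf hyji
    have h1 : 1 ≤ ν ⟨phistar φ hφ y, hpj⟩ := (hiff 1 hS₁ne ⟨_, hpj⟩).mp hps
    have h2 : Even (ν ⟨phistar φ hφ y, hpj⟩) := hEV _ ⟨y, hyji, rfl⟩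
    have h3 : 2 ≤ ν ⟨phistar φ hφ y, hpj⟩ := by obtain ⟨k, hk⟩ := h2; omega
    have h4 : phistar φ hφ y ≤ α := (hiff 2 hS₂ne ⟨_, hpj⟩).mpr h3
    exact (phistar_le_iff φ hφ hinf y α).mp h4
  -- the remainder exponent
  set ν' : {x : H // JoinIrred x} → ℕ := fun x => ν x - min 2 (ν x) with hν'def
  have hνeq : ν = ((fun x : {x : H // JoinIrred x} => if (x : H) ≤ α then 1 else 0) +
      (fun x : {x : H // JoinIrred x} => if (x : H) ≤ β then 1 else 0)) + ν' := by
    funext x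
    simp only [Pi.add_apply, hν'def]
    by_cases h2 : 2 ≤ ν x
    · have hxa : (x : H) ≤ α := (hiff 2 hS₂ne x).mpr h2
      have hxb : (x : H) ≤ β := (hiff 1 hS₁ne x).mpr (by omega)
      simp only [hxa, hxb, if_pos]
      omega
    · by_cases h1 : 1 ≤ ν x
      · have hxb : (x : H) ≤ β := (hiff 1 hS₁ne x).mpr h1
        have hxa : ¬ (x : H) ≤ α := fun h => h2 ((hiff 2 hS₂ne x).mp h)
        simp only [hxa, hxb, if_pos, if_neg, not_false_iff]
        omega
      · have hxb : ¬ (x : H) ≤ β := fun h => h1 ((hiff 1 hS₁ne x).mp h)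
        have hxa : ¬ (x : H) ≤ α := fun h => hxb (h.trans hαβ)
        simp only [hxa, hxb, if_neg, not_false_iff]
        omega
  have hTid : Tpow K ν = (hibiGen K α * hibiGen K β) * Tpow K ν' := by
    rw [hibiGen_eq K α, hibiGen_eq K β, Tpow_mul, Tpow_mul]
    exact congrArg (Tpow K) hνeq
  have hd : ∑ x, ν' x < n := by
    rw [← hsum]
    apply Finset.sum_lt_sum
    · intro i _
      simp only [hν'def]
      omega
    · exact ⟨x₀, Finset.mem_univ _, by simp only [hν'def]; omega⟩
  have hOR' : ∀ x y : {x : H // JoinIrred x}, (x : H) ≤ (y : H) → ν' y ≤ ν' x := by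
    intro x y h
    have := hOR x y h
    simp only [hν'def]
    omega
  have hEV' : ∀ x : {x : H // JoinIrred x},
      (∃ y : L, JoinIrred y ∧ (x : H) = phistar φ hφ y) → Even (ν' x) := by
    intro x hx
    obtain ⟨k, hk⟩ := hEV x hx
    refine ⟨k - 1, ?_⟩
    simp only [hν'def]
    omega
  have hmem' := ih _ hd ν' rfl hOR' hEV'
  rw [hTid]
  exact mul_mem (Algebra.subset_adjoin ⟨α, β, hαβ, hφαβ, rfl⟩) hmem'


/-- The doset Hibi ring `𝒟_K(φ)`, i.e. the `K`-subalgebra of `K[T_x : x ∈ P]` generated by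
the products `e(α)·e(β)` over all `α ≤ β` with `φ α = φ β`, coincides, as a `K`-submodule,
with the span of the monomials `T^ν` where `ν : P → ℕ` is order reversing and `ν (φ* y)` is
even for every join-irreducible `y` of `L`; moreover these monomials are linearly
independent over `K`, hence form a `K`-basis. -/
theorem stmt_2 {H L : Type*} [DistribLattice H] [Fintype H] [DistribLattice L] [Fintype L]
    [DecidableEq L] (K : Type*) [Field K] (φ : H → L) (hφ : Function.Surjective φ)
    (hsup : ∀ a b : H, φ (a ⊔ b) = φ a ⊔ φ b) (hinf : ∀ a b : H, φ (a ⊓ b) = φ a ⊓ φ b) :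
    ((Algebra.adjoin K {f : MvPolynomial {x : H // JoinIrred x} K |
          ∃ α β : H, α ≤ β ∧ φ α = φ β ∧ f = hibiGen K α * hibiGen K β}).toSubmodule =
      Submodule.span K {f : MvPolynomial {x : H // JoinIrred x} K |
        ∃ ν : {x : H // JoinIrred x} → ℕ,
          (∀ x y : {x : H // JoinIrred x}, (x : H) ≤ (y : H) → ν y ≤ ν x) ∧
          (∀ x : {x : H // JoinIrred x},
            (∃ y : L, JoinIrred y ∧ (x : H) = phistar φ hφ y) → Even (ν x)) ∧
          f = Tpow K ν}) ∧
    LinearIndependent K (fun ν : {ν : {x : H // JoinIrred x} → ℕ //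
        (∀ x y : {x : H // JoinIrred x}, (x : H) ≤ (y : H) → ν y ≤ ν x) ∧
        (∀ x : {x : H // JoinIrred x},
          (∃ y : L, JoinIrred y ∧ (x : H) = phistar φ hφ y) → Even (ν x))} =>
      Tpow K ν.1) := by
  constructor
  · set S : Set (MvPolynomial {x : H // JoinIrred x} K) :=
      {f : MvPolynomial {x : H // JoinIrred x} K |
        ∃ ν : {x : H // JoinIrred x} → ℕ,
          (∀ x y : {x : H // JoinIrred x}, (x : H) ≤ (y : H) → ν y ≤ ν x) ∧
          (∀ x : {x : H // JoinIrred x},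
            (∃ y : L, JoinIrred y ∧ (x : H) = phistar φ hφ y) → Even (ν x)) ∧
          f = Tpow K ν} with hSdef
    have hone : (1 : MvPolynomial {x : H // JoinIrred x} K) ∈ Submodule.span K S :=
      Submodule.subset_span ⟨fun _ => 0, fun _ _ _ => le_rfl, fun _ _ => Even.zero,
        (Tpow_zero K).symm⟩
    have hmulset : S * S ⊆ S := by
      rintro f ⟨g1, hg1, g2, hg2, rfl⟩
      obtain ⟨ν, hν1, hν2, rfl⟩ := hg1
      obtain ⟨μ, hμ1, hμ2, rfl⟩ := hg2
      exact ⟨ν + μ, fun x y h => add_le_add (hν1 x y h) (hμ1 x y h),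
        fun x hx => (hν2 x hx).add (hμ2 x hx), (Tpow_mul K ν μ)⟩
    have hmul : ∀ x y : MvPolynomial {x : H // JoinIrred x} K,
        x ∈ Submodule.span K S → y ∈ Submodule.span K S → x * y ∈ Submodule.span K S := by
      intro x y hx hy
      have h1 := Submodule.mul_mem_mul hx hy
      rw [Submodule.span_mul_span] at h1
      exact Submodule.span_le.mpr (hmulset.trans Submodule.subset_span) h1
    apply le_antisymm
    · have hadj : Algebra.adjoin K {f : MvPolynomial {x : H // JoinIrred x} K |
          ∃ α β : H, α ≤ β ∧ φ α = φ β ∧ f = hibiGen K α * hibiGen K β} ≤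
          (Submodule.span K S).toSubalgebra hone hmul := by
        apply Algebra.adjoin_le
        rintro f ⟨α, β, hαβ, hφ2, rfl⟩
        show hibiGen K α * hibiGen K β ∈ Submodule.span K S
        apply Submodule.subset_span
        refine ⟨fun x => (if (x : H) ≤ α then 1 else 0) + (if (x : H) ≤ β then 1 else 0),
          ?_, ?_, ?_⟩
        · intro x y hxy
          have h1 : ∀ γ : H, (if (y : H) ≤ γ then (1:ℕ) else 0) ≤ if (x : H) ≤ γ then 1 else 0 := by
            intro γ
            by_cases hy : (y : H) ≤ γ
            · simp [hy, hxy.trans hy]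
            · simp [hy]
          exact add_le_add (h1 α) (h1 β)
        · rintro x ⟨y', hy', hx⟩
          have hiffa : ((x : H) ≤ α ↔ y' ≤ φ α) := by
            rw [hx]; exact phistar_le_iff φ hφ hinf y' α
          have hiffb : ((x : H) ≤ β ↔ y' ≤ φ β) := by
            rw [hx]; exact phistar_le_iff φ hφ hinf y' β
          by_cases hyφ : y' ≤ φ α
          · have hb : y' ≤ φ β := hφ2 ▸ hyφ
            simp only [hiffa.mpr hyφ, hiffb.mpr hb, if_pos]
            exact Even.add_self 1
          · have hb : ¬ y' ≤ φ β := fun h => hyφ (hφ2 ▸ h)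
            simp only [hiffa, hiffb, hyφ, hb, if_neg, not_false_iff]
            exact Even.zero
        · rw [hibiGen_eq K α, hibiGen_eq K β, Tpow_mul]
          rfl
      intro z hz
      exact hadj hz
    · rw [Submodule.span_le]
      rintro f ⟨ν, h1, h2, rfl⟩
      exact key_mem K φ hφ hsup hinf (∑ x, ν x) ν rfl h1 h2
  · have hbasis := ((MvPolynomial.basisMonomials {x : H // JoinIrred x} K).linearIndependent).comp
      (fun ν : {ν : {x : H // JoinIrred x} → ℕ //
          (∀ x y : {x : H // JoinIrred x}, (x : H) ≤ (y : H) → ν y ≤ ν x) ∧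
          (∀ x : {x : H // JoinIrred x},
            (∃ y : L, JoinIrred y ∧ (x : H) = phistar φ hφ y) → Even (ν x))} =>
        Finsupp.equivFunOnFinite.symm ν.1)
      (fun a b hab => Subtype.ext (Finsupp.equivFunOnFinite.symm.injective hab))
    have heq : (fun ν : {ν : {x : H // JoinIrred x} → ℕ //
          (∀ x y : {x : H // JoinIrred x}, (x : H) ≤ (y : H) → ν y ≤ ν x) ∧
          (∀ x : {x : H // JoinIrred x},
            (∃ y : L, JoinIrred y ∧ (x : H) = phistar φ hφ y) → Even (ν x))} =>
        Tpow K ν.1) = (MvPolynomial.basisMonomials {x : H // JoinIrred x} K) ∘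
          (fun ν => Finsupp.equivFunOnFinite.symm ν.1) := by
      funext ν
      simp only [Function.comp_apply, MvPolynomial.coe_basisMonomials]
      exact Tpow_eq_monomial K ν.1
    rw [heq]
    exact hbasis
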